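/- Let q be an odd prime power, c an element of the algebraic closure of F_q with c^{2(q+1)} = 1 and c^2 ≠ 1, and let A be the set of roots of x^{q^3} + c x^{q^2} + c^{q+1} x^q + c^{q^2+q+1} x. Then A is an F_q-subspace of F_{q^4} of size q^3, and writing c = α^{-(q-1)} with α ∈ F_{q^4}, A equals the kernel of the map x ↦ Tr_{F_{q^4}/F_q}(α x) where α^2 ∈ F_{q^2} \ F_q. -/

import Mathlib

open Polynomial


/-- For `q` odd and `c` with `c^{2(q+1)} = 1`, `c² ≠ 1`, the root set `A` of
`x^{q^3} + c x^{q^2} + c^{q+1} x^q + c^{q^2+q+1} x` is an `F_q`-subspace of `F_{q^4}` of size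
`q^3`, and writing `c = α^{-(q-1)}` with `α ∈ F_{q^4}`, `A` is the kernel of
`x ↦ Tr_{F_{q^4}/F_q}(α x)`, where `α² ∈ F_{q^2} \ F_q`. -/
theorem stmt19 (F : Type*) [Field F] [Fintype F]
    (K : Type*) [Field K] [Algebra F K] [IsAlgClosure F K]
    (q : ℕ) (hq : Fintype.card F = q) (hqodd : Odd q)
    (c : K) (hc1 : c ^ (2 * (q + 1)) = 1) (hc2 : c ^ 2 ≠ 1)
    (A : Set K)
    (hA : A = {x : K |
      x ^ q ^ 3 + c * x ^ q ^ 2 + c ^ (q + 1) * x ^ q + c ^ (q ^ 2 + q + 1) * x = 0}) :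
    (∃ V : Submodule F K, (V : Set K) = A) ∧
    A ⊆ {x : K | x ^ q ^ 4 = x} ∧
    Nat.card A = q ^ 3 ∧
    ∃ α : K, α ≠ 0 ∧ α ^ q ^ 4 = α ∧ c = (α ^ (q - 1))⁻¹ ∧
      (α ^ 2) ^ q ^ 2 = α ^ 2 ∧ (α ^ 2) ^ q ≠ α ^ 2 ∧
      A = {x : K | x ^ q ^ 4 = x ∧
        α * x + (α * x) ^ q + (α * x) ^ q ^ 2 + (α * x) ^ q ^ 3 = 0} := by
  classical
  haveI : IsAlgClosed K := (‹IsAlgClosure F K›).isAlgClosed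
  have hc0 : c ≠ 0 := by
    intro h
    rw [h, zero_pow (by positivity)] at hc1
    exact zero_ne_one hc1
  obtain ⟨k, hk⟩ := hqodd
  -- characteristic setup
  set p := ringChar F with hpdef
  haveI : CharP F p := ringChar.charP F
  obtain ⟨n, hpp, hcard⟩ := FiniteField.card F p
  haveI : CharP K p := charP_of_injective_algebraMap (algebraMap F K).injective p
  haveI := Fact.mk hpp
  have hqp : q = p ^ (n : ℕ) := hq ▸ hcard
  have hq3 : 3 ≤ q := by
    have h2 : 1 < Fintype.card F := Fintype.one_lt_card
    omega
  have hq0K : (q : K) = 0 := by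
    rw [hqp, Nat.cast_pow, CharP.cast_eq_zero K p, zero_pow (by exact_mod_cast n.ne_zero)]
  -- Frobenius identities
  have frobq : ∀ x y : K, (x + y) ^ q = x ^ q + y ^ q := by
    intro x y; rw [hqp]; exact add_pow_char_pow x y p ↑n
  have frobq2 : ∀ x y : K, (x + y) ^ q ^ 2 = x ^ q ^ 2 + y ^ q ^ 2 := by
    intro x y
    rw [show q ^ 2 = q * q from sq q, pow_mul, pow_mul, pow_mul, frobq, frobq]
  have frobq3 : ∀ x y : K, (x + y) ^ q ^ 3 = x ^ q ^ 3 + y ^ q ^ 3 := by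
    intro x y
    rw [show q ^ 3 = q ^ 2 * q from by ring, pow_mul, pow_mul, pow_mul, frobq2, frobq]
  -- powers of c
  have hcq2 : c ^ q ^ 2 = c := by
    have e : q ^ 2 = 2 * (q + 1) * k + 1 := by subst hk; ring
    rw [e, pow_add, pow_mul, hc1, one_pow, pow_one, one_mul]
  have hcq3 : c ^ q ^ 3 = c ^ q := by
    have e : q ^ 3 = q ^ 2 * q := by ring
    rw [e, pow_mul, hcq2]
  have hctr : c ^ (q ^ 3 + q ^ 2 + q + 1) = 1 := by
    have e1 : c ^ (q ^ 3 + q ^ 2 + q + 1) = c ^ q ^ 3 * c ^ q ^ 2 * c ^ q * c := by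
      rw [pow_add, pow_add, pow_add, pow_one]
    have e2 : c ^ q * c * (c ^ q * c) = 1 := by
      have e3 : c ^ q * c * (c ^ q * c) = c ^ (2 * (q + 1)) := by
        rw [show 2 * (q + 1) = (q + 1) + (q + 1) from by ring, pow_add, pow_add, pow_one]
      rw [e3, hc1]
    rw [e1, hcq3, hcq2]
    linear_combination e2
  -- choose α
  obtain ⟨α, hα⟩ := IsAlgClosed.exists_pow_nat_eq (k := K) c⁻¹ (n := q - 1) (by omega)
  have hα2k : α ^ (2 * k) = c⁻¹ := by rwa [show q - 1 = 2 * k from by omega] at hα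
  have hα0 : α ≠ 0 := by
    intro h
    rw [h, zero_pow (by omega)] at hα2k
    exact hc0 (by rw [← inv_inv c, ← hα2k, inv_zero])
  have key : ∀ a b : ℕ, α ^ (a + 2 * k * b) = α ^ a * (c ^ b)⁻¹ := by
    intro a b
    rw [pow_add, pow_mul, hα2k, inv_pow]
  have hα4 : α ^ q ^ 4 = α := by
    have e : q ^ 4 = 1 + 2 * k * (q ^ 3 + q ^ 2 + q + 1) := by subst hk; ring
    rw [e, key, pow_one, hctr, inv_one, mul_one]
  have hcinv : c = (α ^ (q - 1))⁻¹ := by rw [hα, inv_inv]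
  have heq3 : α = c ^ (q ^ 2 + q + 1) * α ^ q ^ 3 := by
    have e : q ^ 3 = 1 + 2 * k * (q ^ 2 + q + 1) := by subst hk; ring
    have h := key 1 (q ^ 2 + q + 1)
    rw [← e, pow_one] at h
    rw [h, mul_left_comm, mul_inv_cancel₀ (pow_ne_zero _ hc0), mul_one]
  have heq2 : α ^ q ^ 2 = c * α ^ q ^ 3 := by
    have e : q ^ 3 = q ^ 2 + 2 * k * q ^ 2 := by subst hk; ring
    have h := key (q ^ 2) (q ^ 2)
    rw [← e, hcq2] at h
    rw [h, mul_left_comm, mul_inv_cancel₀ hc0, mul_one]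
  have heq1 : α ^ q = c ^ (q + 1) * α ^ q ^ 3 := by
    have e : q ^ 3 = q + 2 * k * (q ^ 2 + q) := by subst hk; ring
    have h := key q (q ^ 2 + q)
    rw [← e, show c ^ (q ^ 2 + q) = c ^ (q + 1) from by
      rw [pow_add, hcq2, pow_add, pow_one, mul_comm]] at h
    rw [h, mul_left_comm, mul_inv_cancel₀ (pow_ne_zero _ hc0), mul_one]
  have hα2q2 : (α ^ 2) ^ q ^ 2 = α ^ 2 := by
    have h := key 2 (2 * (q + 1))
    rw [show 2 + 2 * k * (2 * (q + 1)) = 2 * q ^ 2 from by subst hk; ring,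
      hc1, inv_one, mul_one] at h
    rw [← pow_mul]
    exact h
  have hα2q : (α ^ 2) ^ q ≠ α ^ 2 := by
    intro h
    have h2 := key 2 2
    rw [show 2 + 2 * k * 2 = 2 * q from by subst hk; ring] at h2
    rw [← pow_mul] at h
    rw [h] at h2
    have hα2 : (α : K) ^ 2 ≠ 0 := pow_ne_zero _ hα0
    have h3 : α ^ 2 * 1 = α ^ 2 * (c ^ 2)⁻¹ := by rw [mul_one]; exact h2
    have h4 := mul_left_cancel₀ hα2 h3
    rw [eq_comm, inv_eq_one] at h4
    exact hc2 h4
  -- the trace form identity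
  have hαq3 : α ^ q ^ 3 ≠ 0 := pow_ne_zero _ hα0
  have hT : ∀ x : K, α * x + (α * x) ^ q + (α * x) ^ q ^ 2 + (α * x) ^ q ^ 3
      = α ^ q ^ 3 * (x ^ q ^ 3 + c * x ^ q ^ 2 + c ^ (q + 1) * x ^ q
        + c ^ (q ^ 2 + q + 1) * x) := by
    intro x
    rw [mul_pow, mul_pow, mul_pow, heq1, heq2]
    linear_combination x * heq3
  have hmem : ∀ x : K, x ∈ A ↔
      α * x + (α * x) ^ q + (α * x) ^ q ^ 2 + (α * x) ^ q ^ 3 = 0 := by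
    intro x
    rw [hA, Set.mem_setOf_eq, hT x]
    constructor
    · intro h
      rw [h, mul_zero]
    · intro h
      exact (mul_eq_zero.mp h).resolve_left hαq3
  -- roots lie in F_{q^4}
  have hpow4 : ∀ x : K, x + x ^ q + x ^ q ^ 2 + x ^ q ^ 3 = 0 → x ^ q ^ 4 = x := by
    intro x h
    have h2 : (x + x ^ q + x ^ q ^ 2 + x ^ q ^ 3) ^ q = 0 := by
      rw [h, zero_pow (by omega)]
    rw [frobq, frobq, frobq, ← pow_mul, ← pow_mul, ← pow_mul,
      show q * q = q ^ 2 from by ring, show q ^ 2 * q = q ^ 3 from by ring,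
      show q ^ 3 * q = q ^ 4 from by ring] at h2
    linear_combination h2 - h
  have hsub4 : ∀ x ∈ A, x ^ q ^ 4 = x := by
    intro x hx
    have h := (hmem x).mp hx
    have h4 : (α * x) ^ q ^ 4 = α * x := hpow4 (α * x) h
    rw [mul_pow, hα4] at h4
    exact mul_left_cancel₀ hα0 h4
  -- the algebraMap is fixed by Frobenius
  have hbF : ∀ (a : F) (m : ℕ), (algebraMap F K a) ^ q ^ m = algebraMap F K a := by
    intro a m
    rw [← map_pow]
    congr 1
    rw [← hq]
    exact FiniteField.pow_card_pow m a
  -- cardinality via polynomial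
  set P : K[X] := X ^ q ^ 3 + C c * X ^ q ^ 2 + C (c ^ (q + 1)) * X ^ q
    + C (c ^ (q ^ 2 + q + 1)) * X with hPdef
  have hq23 : q ^ 2 < q ^ 3 := by nlinarith
  have hq13 : q < q ^ 3 := by nlinarith
  have hdeg : P.natDegree = q ^ 3 := by
    have b1 : (C c * X ^ q ^ 2 : K[X]).natDegree ≤ q ^ 2 := by
      exact (natDegree_C_mul_le c _).trans (natDegree_X_pow _).le
    have b2 : (C (c ^ (q + 1)) * X ^ q : K[X]).natDegree ≤ q := by
      exact (natDegree_C_mul_le (c ^ (q + 1)) _).trans (natDegree_X_pow _).le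
    have b3 : (C (c ^ (q ^ 2 + q + 1)) * X : K[X]).natDegree ≤ 1 := by
      exact (natDegree_C_mul_le (c ^ (q ^ 2 + q + 1)) _).trans natDegree_X.le
    have hlt : (C c * X ^ q ^ 2 + (C (c ^ (q + 1)) * X ^ q
        + C (c ^ (q ^ 2 + q + 1)) * X) : K[X]).natDegree < q ^ 3 := by
      apply lt_of_le_of_lt (natDegree_add_le _ _)
      rw [max_lt_iff]
      refine ⟨lt_of_le_of_lt b1 hq23, lt_of_le_of_lt (natDegree_add_le _ _) ?_⟩
      rw [max_lt_iff]
      exact ⟨lt_of_le_of_lt b2 hq13, lt_of_le_of_lt b3 (by omega)⟩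
    have hmain := natDegree_add_eq_left_of_natDegree_lt
      (p := (X : K[X]) ^ q ^ 3)
      (q := C c * X ^ q ^ 2 + (C (c ^ (q + 1)) * X ^ q + C (c ^ (q ^ 2 + q + 1)) * X))
      (by rw [natDegree_X_pow]; exact hlt)
    rw [hPdef, add_assoc, add_assoc, hmain, natDegree_X_pow]
  have hPne : P ≠ 0 := by
    intro h
    rw [h, natDegree_zero] at hdeg
    have : q ^ 3 ≠ 0 := by positivity
    omega
  have hD : derivative P = C (c ^ (q ^ 2 + q + 1)) := by
    rw [hPdef]
    simp only [derivative_add, derivative_mul, derivative_C, derivative_X_pow, derivative_X,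
      zero_mul, zero_add, mul_one]
    rw [show ((q ^ 3 : ℕ) : K) = 0 from by push_cast [hq0K]; ring,
      show ((q ^ 2 : ℕ) : K) = 0 from by push_cast [hq0K]; ring,
      show ((q : ℕ) : K) = 0 from hq0K]
    simp
  have hsep : P.Separable := by
    rw [Polynomial.separable_def, hD]
    exact ⟨0, C (c ^ (q ^ 2 + q + 1))⁻¹, by
      rw [zero_mul, zero_add, ← C_mul, inv_mul_cancel₀ (pow_ne_zero _ hc0), C_1]⟩
  have hroot : A = P.rootSet K := by
    ext x
    rw [Polynomial.mem_rootSet, hA, Set.mem_setOf_eq]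
    simp only [hPdef, map_add, map_mul, aeval_X_pow, aeval_C, aeval_X]
    exact ⟨fun h => ⟨hPne, h⟩, fun h => h.2⟩
  have hcardA : Nat.card A = q ^ 3 := by
    rw [hroot, Nat.card_eq_fintype_card,
      Polynomial.card_rootSet_eq_natDegree hsep (IsAlgClosed.splits_domain (f := algebraMap K K) P), hdeg]
  refine ⟨⟨{ carrier := A
             add_mem' := ?_
             zero_mem' := ?_
             smul_mem' := ?_ }, rfl⟩, fun x hx => hsub4 x hx, hcardA, α, hα0, hα4, hcinv,
    hα2q2, hα2q, ?_⟩
  · intro x y hx hy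
    have hx' := (hmem x).mp hx
    have hy' := (hmem y).mp hy
    apply (hmem (x + y)).mpr
    rw [mul_add, frobq, frobq2, frobq3]
    linear_combination hx' + hy'
  · apply (hmem 0).mpr
    rw [mul_zero, zero_pow (show q ≠ 0 by omega), zero_pow (show q ^ 2 ≠ 0 by positivity),
      zero_pow (show q ^ 3 ≠ 0 by positivity)]
    ring
  · intro a x hx
    have hx' := (hmem x).mp hx
    apply (hmem (a • x)).mpr
    rw [Algebra.smul_def]
    have hb1 : (algebraMap F K a) ^ q = algebraMap F K a := by
      have := hbF a 1; rwa [pow_one] at this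
    have hb2 : (algebraMap F K a) ^ q ^ 2 = algebraMap F K a := hbF a 2
    have hb3 : (algebraMap F K a) ^ q ^ 3 = algebraMap F K a := hbF a 3
    rw [show α * (algebraMap F K a * x) = algebraMap F K a * (α * x) from by ring]
    simp only [mul_pow, hb1, hb2, hb3]
    have hx'' := hx'
    simp only [mul_pow] at hx''
    linear_combination (algebraMap F K a) * hx''
  · ext x
    rw [Set.mem_setOf_eq]
    constructor
    · intro hx
      exact ⟨hsub4 x hx, (hmem x).mp hx⟩
    · rintro ⟨-, h⟩
      exact (hmem x).mpr h
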